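/- Proposition 2.8 (abstract approximation of compositions of a polynomially growing number of functions with Lipschitz constant 1): Let c ∈ ℕ and p ∈ [1,∞]. For every d ∈ ℕ let k(d) ∈ {1,…,c·d^c} and 𝔡_1^d, 𝔡_2^d, …, 𝔡_{k(d)+1}^d ∈ {1,…,d^c}; for every d ∈ ℕ and i ∈ {1,…,k(d)} let Q_i^d ⊆ ℝ^{𝔡_i^d} be a 𝔡_i^d-dimensional hypercube and let g_i^d ∈ C(Q_i^d, ℝ^{𝔡_{i+1}^d}). Assume for all d ∈ ℕ, i ∈ {1,…,k(d)}, ε ∈ (0,1] that Cost_p(g_i^d, 1, ε) ≤ c·d^c·ε^{−c}, and assume for all d ∈ ℕ and i ∈ {1,…,k(d)−1} that g_i^d(Q_i^d) ⊆ Q_{i+1}^d. For every d ∈ ℕ let F_d = g_{k(d)}^d ∘ g_{k(d)−1}^d ∘ ⋯ ∘ g_1^d ∈ C(Q_1^d, ℝ^{𝔡_{k(d)+1}^d}). Then there exists K ∈ ℕ such that for every d ∈ ℕ and ε ∈ (0,1] there exists a DNN Φ with R(Φ) ∈ C(ℝ^{𝔡_1^d}, ℝ^{𝔡_{k(d)+1}^d}),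 P(Φ) ≤ K·d^K·ε^{−c}, and ‖R(Φ)(x) − F_d(x)‖_p ≤ ε for all x ∈ Q_1^d. -/

import Mathlib

open scoped BigOperators ENNReal

noncomputable section

/-- A ReLU deep neural network with `L + 1` affine layers (so depth at least one),
layer dimensions `ℓ 0, ℓ 1, …, ℓ (L + 1)`, weight matrices `W k` and bias vectors `b k`
(values of `ℓ`, `W`, `b` beyond layer index `L` are irrelevant for the realization
and for the number of parameters). -/
structure DNN where
  L : ℕ
  ℓ : ℕ → ℕ
  W : (k : ℕ) → Matrix (Fin (ℓ (k + 1))) (Fin (ℓ k)) ℝ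
  b : (k : ℕ) → Fin (ℓ (k + 1)) → ℝ

namespace DNN

/-- The number of parameters `P(Φ) = ∑_{k=1}^{L} ℓ_k (ℓ_{k-1} + 1)` of a DNN. -/
def params (Φ : DNN) : ℕ :=
  ∑ k ∈ Finset.range (Φ.L + 1), Φ.ℓ (k + 1) * (Φ.ℓ k + 1)

/-- The `k`-th affine layer function `x ↦ W_k x + b_k`. -/
def affine (Φ : DNN) (k : ℕ) (x : Fin (Φ.ℓ k) → ℝ) : Fin (Φ.ℓ (k + 1)) → ℝ :=
  fun i => (∑ j, Φ.W k i j * x j) + Φ.b k i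

/-- The value after `k` affine layers, each followed by the ReLU activation. -/
def hidden (Φ : DNN) : (k : ℕ) → (Fin (Φ.ℓ 0) → ℝ) → (Fin (Φ.ℓ k) → ℝ)
  | 0 => id
  | k + 1 => fun x i => max (affine Φ k (hidden Φ k x) i) 0

/-- The realization `R(Φ)`: all affine layers with ReLU in between (no activation after
the last affine layer). -/
def realize (Φ : DNN) (x : Fin (Φ.ℓ 0) → ℝ) : Fin (Φ.ℓ (Φ.L + 1)) → ℝ :=
  affine Φ Φ.L (hidden Φ Φ.L x)

/-- `Φ.Realizes f` means that the realization of `Φ` is the function `f : ℝ^m → ℝ^n`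
(in particular the input and output dimensions of `Φ` are `m` and `n`). -/
def Realizes (Φ : DNN) {m n : ℕ} (f : (Fin m → ℝ) → (Fin n → ℝ)) : Prop :=
  ∃ (hm : Φ.ℓ 0 = m) (hn : Φ.ℓ (Φ.L + 1) = n),
    ∀ (x : Fin m → ℝ) (i : Fin n),
      f x i = realize Φ (fun j => x (Fin.cast hm j)) (Fin.cast hn.symm i)

end DNN

/-- The `ℓ^p`-norm on `ℝ^k` for `p ∈ [1,∞]`. -/
def lpNorm (p : ℝ≥0∞) {k : ℕ} (x : Fin k → ℝ) : ℝ :=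
  if p = ∞ then ⨆ i, |x i| else (∑ i, |x i| ^ p.toReal) ^ (1 / p.toReal)

/-- The hypercube `[a,b]^d ⊆ ℝ^d`. -/
def cube (d : ℕ) (a b : ℝ) : Set (Fin d → ℝ) :=
  Set.Icc (fun _ => a) (fun _ => b)

/-- `Cost p D f L ε`: the minimal number of parameters of a DNN whose realization
approximates `f` on `D` up to `ε` in the `ℓ^p`-norm and is `L`-Lipschitz on `D`
with respect to the `ℓ^p`-norm; `∞` if no such DNN exists. -/
def Cost (p : ℝ≥0∞) {m n : ℕ} (D : Set (Fin m → ℝ))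
    (f : (Fin m → ℝ) → (Fin n → ℝ)) (L ε : ℝ) : ℝ≥0∞ :=
  sInf { N : ℝ≥0∞ | ∃ Φ : DNN, ∃ g : (Fin m → ℝ) → (Fin n → ℝ),
    Φ.Realizes g ∧ N = (Φ.params : ℝ≥0∞) ∧
    (∀ x ∈ D, lpNorm p (g x - f x) ≤ ε) ∧
    (∀ x ∈ D, ∀ y ∈ D, lpNorm p (g x - g y) ≤ L * lpNorm p (x - y)) }

/-- Given block sizes `d : Fin n → ℕ`, the index in `Fin (∑ j, d j)` of the `l`-th
coordinate of the `i`-th block (blocks are arranged consecutively). -/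
def blockIdx {n : ℕ} (d : Fin n → ℕ) (i : Fin n) (l : Fin (d i)) : Fin (∑ j, d j) :=
  ⟨(∑ j ∈ Finset.univ.filter (fun j => j < i), d j) + l.1, by
    have h1 : l.1 < d i := l.2
    have h2 : (∑ j ∈ Finset.univ.filter (fun j => j < i), d j) + d i ≤ ∑ j, d j := by
      have hsplit := Finset.sum_filter_add_sum_filter_not Finset.univ (fun j => j < i) d
      have h3 : d i ≤ ∑ j ∈ Finset.univ.filter (fun j => ¬ j < i), d j :=
        Finset.single_le_sum (fun _ _ => Nat.zero_le _) (by simp)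
      omega
    omega⟩

/-- The class `𝒫_{k,p}([a,b]^d, L)`: parallelizations `f = f_1 □ ⋯ □ f_m` of real-valued
functions `f_i` of at most `k` variables that are `L`-Lipschitz w.r.t. the `ℓ^p`-norm. -/
def MemPLip (k : ℕ) (p : ℝ≥0∞) (a b L : ℝ) {d m : ℕ}
    (f : (Fin d → ℝ) → (Fin m → ℝ)) : Prop :=
  ∃ (dims : Fin m → ℕ) (hd : ∑ i, dims i = d) (g : ∀ i, (Fin (dims i) → ℝ) → ℝ),
    (∀ i, 0 < dims i) ∧ (∀ i, dims i ≤ k) ∧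
    (∀ i, ∀ x ∈ cube (dims i) a b, ∀ y ∈ cube (dims i) a b,
      |g i x - g i y| ≤ L * lpNorm p (x - y)) ∧
    (∀ x ∈ cube d a b, ∀ i : Fin m,
      f x i = g i (fun l => x (Fin.cast hd (blockIdx dims i l))))

/-- The class `M([a,b]^d)`: parallelizations of maximum functions `m_{d_1} □ ⋯ □ m_{d_m}`. -/
def MemMaxClass (a b : ℝ) {d m : ℕ} (f : (Fin d → ℝ) → (Fin m → ℝ)) : Prop :=
  ∃ (dims : Fin m → ℕ) (hd : ∑ i, dims i = d),
    (∀ i, 0 < dims i) ∧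
    (∀ x ∈ cube d a b, ∀ i : Fin m,
      f x i = ⨆ l : Fin (dims i), x (Fin.cast hd (blockIdx dims i l)))

/-- The class `P([a,b]^d)`: parallelizations of product functions `p_{d_1} □ ⋯ □ p_{d_m}`. -/
def MemProdClass (a b : ℝ) {d m : ℕ} (f : (Fin d → ℝ) → (Fin m → ℝ)) : Prop :=
  ∃ (dims : Fin m → ℕ) (hd : ∑ i, dims i = d),
    (∀ i, 0 < dims i) ∧
    (∀ x ∈ cube d a b, ∀ i : Fin m,
      f x i = ∏ l : Fin (dims i), x (Fin.cast hd (blockIdx dims i l)))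

/-- `f` coincides on `[a,b]^d` with the extended maximum function
`𝔪_d(x) = (max{x_1}, max{x_1,x_2}, …, max{x_1,…,x_d})`. -/
def IsExtMaxOn (a b : ℝ) {d m : ℕ} (f : (Fin d → ℝ) → (Fin m → ℝ)) : Prop :=
  ∃ h : d = m, ∀ x ∈ cube d a b, ∀ i : Fin m,
    f x i = (Finset.Iic (Fin.cast h.symm i)).sup' Finset.nonempty_Iic x

/-- `f` coincides on `[a,b]^d` with the extended product function
`𝔭_d(x) = (x_1, x_1 x_2, …, x_1 ⋯ x_d)`. -/
def IsExtProdOn (a b : ℝ) {d m : ℕ} (f : (Fin d → ℝ) → (Fin m → ℝ)) : Prop :=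
  ∃ h : d = m, ∀ x ∈ cube d a b, ∀ i : Fin m,
    f x i = ∏ j ∈ Finset.Iic (Fin.cast h.symm i), x j

/-- Iterated composition: `compSeq dims f k = f_{k-1} ∘ ⋯ ∘ f_1 ∘ f_0`. -/
def compSeq (dims : ℕ → ℕ) (f : ∀ i : ℕ, (Fin (dims i) → ℝ) → (Fin (dims (i + 1)) → ℝ)) :
    (k : ℕ) → (Fin (dims 0) → ℝ) → (Fin (dims k) → ℝ)
  | 0 => id
  | k + 1 => fun x => f k (compSeq dims f k x)


section Aux

variable {p : ℝ≥0∞} (hp : 1 ≤ p)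

lemma lpNorm_mono {k : ℕ} {x y : Fin k → ℝ} (h : ∀ i, |x i| ≤ |y i|) :
    lpNorm p x ≤ lpNorm p y := by
  unfold lpNorm
  split
  · cases isEmpty_or_nonempty (Fin k)
    · simp [Real.iSup_of_isEmpty]
    · exact ciSup_mono (Set.Finite.bddAbove (Set.finite_range _)) h
  · apply Real.rpow_le_rpow (Finset.sum_nonneg fun i _ => Real.rpow_nonneg (abs_nonneg _) _)
      (Finset.sum_le_sum fun i _ => Real.rpow_le_rpow (abs_nonneg _) (h i) ENNReal.toReal_nonneg)
      (by positivity)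

lemma lpNorm_nonneg {k : ℕ} (x : Fin k → ℝ) : 0 ≤ lpNorm p x := by
  unfold lpNorm
  split
  · cases isEmpty_or_nonempty (Fin k)
    · simp [Real.iSup_of_isEmpty]
    · exact le_ciSup_of_le (Set.Finite.bddAbove (Set.finite_range _)) (Classical.arbitrary _)
        (abs_nonneg _)
  · positivity

include hp in
lemma lpNorm_add_le {k : ℕ} (x y : Fin k → ℝ) :
    lpNorm p (x + y) ≤ lpNorm p x + lpNorm p y := by
  unfold lpNorm
  split
  · cases isEmpty_or_nonempty (Fin k)
    · simp [Real.iSup_of_isEmpty]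
    · refine ciSup_le fun i => ?_
      calc |(x + y) i| ≤ |x i| + |y i| := abs_add_le _ _
        _ ≤ _ := add_le_add
          (le_ciSup (Set.Finite.bddAbove (Set.finite_range fun i => |x i|)) i)
          (le_ciSup (Set.Finite.bddAbove (Set.finite_range fun i => |y i|)) i)
  · have hp1 : (1:ℝ) ≤ p.toReal := by
      rename_i hne
      have := (ENNReal.toReal_le_toReal (by simp) hne).mpr hp
      simpa using this
    exact Real.Lp_add_le Finset.univ x y hp1


lemma DNN.W_cast (Φ : DNN) {k k' : ℕ} (e : k = k') {m n : ℕ}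
    (p1 : m = Φ.ℓ (k + 1)) (p1' : m = Φ.ℓ (k' + 1)) (p2 : n = Φ.ℓ k) (p2' : n = Φ.ℓ k')
    (i : Fin m) (t : Fin n) :
    Φ.W k (Fin.cast p1 i) (Fin.cast p2 t) = Φ.W k' (Fin.cast p1' i) (Fin.cast p2' t) := by
  subst e; rfl

lemma DNN.b_cast (Φ : DNN) {k k' : ℕ} (e : k = k') {m : ℕ}
    (p1 : m = Φ.ℓ (k + 1)) (p1' : m = Φ.ℓ (k' + 1)) (i : Fin m) :
    Φ.b k (Fin.cast p1 i) = Φ.b k' (Fin.cast p1' i) := by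
  subst e; rfl

def clip (a b t : ℝ) : ℝ := max a (min b t)

lemma clip_le {a b t : ℝ} (hab : a ≤ b) : clip a b t ≤ b :=
  max_le hab (min_le_left _ _)

lemma le_clip {a b t : ℝ} : a ≤ clip a b t := le_max_left _ _

lemma clip_of_mem {a b t : ℝ} (h1 : a ≤ t) (h2 : t ≤ b) : clip a b t = t := by
  unfold clip; rw [min_eq_right h2, max_eq_right h1]

lemma abs_clip_sub_clip {a b s t : ℝ} : |clip a b s - clip a b t| ≤ |s - t| := by
  unfold clip
  calc |max a (min b s) - max a (min b t)| ≤ max |a - a| |min b s - min b t| :=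
        abs_max_sub_max_le_max _ _ _ _
    _ ≤ max |a - a| (max |b - b| |s - t|) :=
        max_le_max le_rfl (abs_min_sub_min_le_max _ _ _ _)
    _ ≤ |s - t| := by simp

lemma clip_identity {a b u : ℝ} (hab : a ≤ b) :
    b - max (b - a - max (u - a) 0) 0 = clip a b u := by
  unfold clip
  rcases le_total u a with h | h
  · rw [max_eq_right (by linarith : u - a ≤ 0), min_eq_right (by linarith : u ≤ b),
      max_eq_left h, sub_zero, max_eq_left (by linarith : 0 ≤ b - a)]
    ring
  · rw [max_eq_left (by linarith : 0 ≤ u - a)]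
    rcases le_total u b with h2 | h2
    · rw [min_eq_right h2, max_eq_right h, max_eq_left (by linarith : 0 ≤ b - a - (u - a))]
      ring
    · rw [min_eq_left h2, max_eq_right hab, max_eq_right (by linarith : b - a - (u - a) ≤ 0)]
      ring

section ClipComp

variable (Φ₁ Φ₂ : DNN)

/-- Layer dimensions of the clipped composition. -/
def cℓ : ℕ → ℕ := fun k => if k ≤ Φ₁.L + 1 then Φ₁.ℓ k else Φ₂.ℓ (k - (Φ₁.L + 2))

lemma cℓ_low {k : ℕ} (hk : k ≤ Φ₁.L + 1) : cℓ Φ₁ Φ₂ k = Φ₁.ℓ k := if_pos hk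

lemma cℓ_high {k : ℕ} (hk : Φ₁.L + 2 ≤ k) : cℓ Φ₁ Φ₂ k = Φ₂.ℓ (k - (Φ₁.L + 2)) :=
  if_neg (by omega)

variable (a b : ℝ)

/-- Composition of two DNNs with a clipping to `[a,b]` inserted at the junction. -/
def clipComp : DNN where
  L := Φ₁.L + Φ₂.L + 2
  ℓ := cℓ Φ₁ Φ₂
  W := fun k =>
    if hk : k ≤ Φ₁.L then
      fun i j => Φ₁.W k (Fin.cast (cℓ_low Φ₁ Φ₂ (by omega)) i)
        (Fin.cast (cℓ_low Φ₁ Φ₂ (by omega)) j)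
    else if hk2 : k = Φ₁.L + 1 then
      fun i j => if (i : ℕ) = (j : ℕ) then (-1 : ℝ) else 0
    else if hk3 : k = Φ₁.L + 2 then
      fun i j => - Φ₂.W 0
        (Fin.cast ((cℓ_high Φ₁ Φ₂ (by omega)).trans (congrArg Φ₂.ℓ (by omega))) i)
        (Fin.cast ((cℓ_high Φ₁ Φ₂ (by omega)).trans (congrArg Φ₂.ℓ (by omega))) j)
    else
      fun i j => Φ₂.W (k - (Φ₁.L + 2))
        (Fin.cast ((cℓ_high Φ₁ Φ₂ (by omega)).trans (congrArg Φ₂.ℓ (by omega))) i)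
        (Fin.cast ((cℓ_high Φ₁ Φ₂ (by omega)).trans (congrArg Φ₂.ℓ (by omega))) j)
  b := fun k =>
    if hk : k ≤ Φ₁.L then
      fun i => Φ₁.b k (Fin.cast (cℓ_low Φ₁ Φ₂ (by omega)) i) -
        (if k = Φ₁.L then a else 0)
    else if hk2 : k = Φ₁.L + 1 then
      fun _ => b - a
    else if hk3 : k = Φ₁.L + 2 then
      fun i => (∑ j, Φ₂.W 0
          (Fin.cast ((cℓ_high Φ₁ Φ₂ (by omega)).trans (congrArg Φ₂.ℓ (by omega))) i) j * b)
        + Φ₂.b 0 (Fin.cast ((cℓ_high Φ₁ Φ₂ (by omega)).trans (congrArg Φ₂.ℓ (by omega))) i)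
    else
      fun i => Φ₂.b (k - (Φ₁.L + 2))
        (Fin.cast ((cℓ_high Φ₁ Φ₂ (by omega)).trans (congrArg Φ₂.ℓ (by omega))) i)

lemma clipComp_ℓ_zero : (clipComp Φ₁ Φ₂ a b).ℓ 0 = Φ₁.ℓ 0 := by
  show cℓ Φ₁ Φ₂ 0 = _
  exact cℓ_low Φ₁ Φ₂ (by omega)

lemma clipComp_ℓ_top :
    (clipComp Φ₁ Φ₂ a b).ℓ ((clipComp Φ₁ Φ₂ a b).L + 1) = Φ₂.ℓ (Φ₂.L + 1) := by
  show cℓ Φ₁ Φ₂ (Φ₁.L + Φ₂.L + 2 + 1) = _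
  rw [cℓ_high Φ₁ Φ₂ (by omega)]
  congr 1
  omega

end ClipComp

section ClipCompLemmas

variable (Φ₁ Φ₂ : DNN) (a b : ℝ)

lemma clipComp_params :
    (clipComp Φ₁ Φ₂ a b).params
      = Φ₁.params + (Φ₂.ℓ 0 * (Φ₁.ℓ (Φ₁.L + 1) + 1) + Φ₂.params) := by
  show ∑ k ∈ Finset.range (Φ₁.L + Φ₂.L + 2 + 1), cℓ Φ₁ Φ₂ (k+1) * (cℓ Φ₁ Φ₂ k + 1) = _
  have hsplit : Φ₁.L + Φ₂.L + 2 + 1 = (Φ₁.L + 1) + (1 + (Φ₂.L + 1)) := by omega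
  rw [hsplit]
  rw [Finset.sum_range_add (fun k => cℓ Φ₁ Φ₂ (k+1) * (cℓ Φ₁ Φ₂ k + 1)) (Φ₁.L + 1)
    (1 + (Φ₂.L + 1))]
  rw [Finset.sum_range_add (fun k => cℓ Φ₁ Φ₂ (Φ₁.L + 1 + k + 1) *
    (cℓ Φ₁ Φ₂ (Φ₁.L + 1 + k) + 1)) 1 (Φ₂.L + 1)]
  have h1 : ∑ k ∈ Finset.range (Φ₁.L + 1), cℓ Φ₁ Φ₂ (k+1) * (cℓ Φ₁ Φ₂ k + 1)
      = Φ₁.params := by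
    apply Finset.sum_congr rfl
    intro k hk
    simp only [Finset.mem_range] at hk
    have e1 : cℓ Φ₁ Φ₂ (k + 1) = Φ₁.ℓ (k + 1) := cℓ_low Φ₁ Φ₂ (by omega)
    have e2 : cℓ Φ₁ Φ₂ k = Φ₁.ℓ k := cℓ_low Φ₁ Φ₂ (by omega)
    rw [e1, e2]
  have h2 : ∑ k ∈ Finset.range 1, cℓ Φ₁ Φ₂ (Φ₁.L + 1 + k + 1) * (cℓ Φ₁ Φ₂ (Φ₁.L + 1 + k) + 1)
      = Φ₂.ℓ 0 * (Φ₁.ℓ (Φ₁.L + 1) + 1) := by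
    rw [Finset.sum_range_one]
    have e1 : cℓ Φ₁ Φ₂ (Φ₁.L + 1 + 0 + 1) = Φ₂.ℓ 0 := by
      rw [cℓ_high Φ₁ Φ₂ (by omega)]; congr 1; omega
    have e2 : cℓ Φ₁ Φ₂ (Φ₁.L + 1 + 0) = Φ₁.ℓ (Φ₁.L + 1) := cℓ_low Φ₁ Φ₂ (by omega)
    rw [e1, e2]
  have h3 : ∑ k ∈ Finset.range (Φ₂.L + 1), cℓ Φ₁ Φ₂ (Φ₁.L + 1 + (1 + k) + 1) *
      (cℓ Φ₁ Φ₂ (Φ₁.L + 1 + (1 + k)) + 1) = Φ₂.params := by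
    apply Finset.sum_congr rfl
    intro k hk
    simp only [Finset.mem_range] at hk
    have e1 : cℓ Φ₁ Φ₂ (Φ₁.L + 1 + (1 + k) + 1) = Φ₂.ℓ (k + 1) := by
      rw [cℓ_high Φ₁ Φ₂ (by omega)]; congr 1; omega
    have e2 : cℓ Φ₁ Φ₂ (Φ₁.L + 1 + (1 + k)) = Φ₂.ℓ k := by
      rw [cℓ_high Φ₁ Φ₂ (by omega)]; congr 1; omega
    rw [e1, e2]
  rw [h1, h2, h3]

/-- The input of `Φ₁` corresponding to an input of the composition. -/
def inp (x : Fin ((clipComp Φ₁ Φ₂ a b).ℓ 0) → ℝ) : Fin (Φ₁.ℓ 0) → ℝ :=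
  fun s => x (Fin.cast (clipComp_ℓ_zero Φ₁ Φ₂ a b).symm s)

/-- The clipped output of `Φ₁`, fed into `Φ₂`. -/
def junc (h : Φ₁.ℓ (Φ₁.L + 1) = Φ₂.ℓ 0) (x : Fin ((clipComp Φ₁ Φ₂ a b).ℓ 0) → ℝ) :
    Fin (Φ₂.ℓ 0) → ℝ :=
  fun t => clip a b (Φ₁.realize (inp Φ₁ Φ₂ a b x) (Fin.cast h.symm t))

variable (x : Fin ((clipComp Φ₁ Φ₂ a b).ℓ 0) → ℝ)

lemma clipComp_hidden_low : ∀ k, (hk : k ≤ Φ₁.L) → ∀ i,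
    (clipComp Φ₁ Φ₂ a b).hidden k x i
      = Φ₁.hidden k (inp Φ₁ Φ₂ a b x) (Fin.cast (cℓ_low Φ₁ Φ₂ (by omega)) i) := by
  intro k
  induction k with
  | zero => intro hk i; rfl
  | succ k ih =>
    intro hk i
    show max ((clipComp Φ₁ Φ₂ a b).affine k ((clipComp Φ₁ Φ₂ a b).hidden k x) i) 0 = _
    have hrhs : Φ₁.hidden (k+1) (inp Φ₁ Φ₂ a b x) (Fin.cast (cℓ_low Φ₁ Φ₂ (by omega)) i)
        = max (Φ₁.affine k (Φ₁.hidden k (inp Φ₁ Φ₂ a b x))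
            (Fin.cast (cℓ_low Φ₁ Φ₂ (by omega)) i)) 0 := rfl
    rw [hrhs]
    congr 1
    show (∑ j, (clipComp Φ₁ Φ₂ a b).W k i j * (clipComp Φ₁ Φ₂ a b).hidden k x j)
        + (clipComp Φ₁ Φ₂ a b).b k i = _
    have hW : (clipComp Φ₁ Φ₂ a b).W k = fun i j =>
        Φ₁.W k (Fin.cast (cℓ_low Φ₁ Φ₂ (by omega)) i)
          (Fin.cast (cℓ_low Φ₁ Φ₂ (by omega)) j) := by
      show (if hk : k ≤ Φ₁.L then _ else _) = _
      erw [dif_pos (by omega : k ≤ Φ₁.L)]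
    have hb : (clipComp Φ₁ Φ₂ a b).b k = fun i =>
        Φ₁.b k (Fin.cast (cℓ_low Φ₁ Φ₂ (by omega)) i) - (if k = Φ₁.L then a else 0) := by
      show (if hk : k ≤ Φ₁.L then _ else _) = _
      erw [dif_pos (by omega : k ≤ Φ₁.L)]
    simp only [hW, hb]
    rw [if_neg (by omega : ¬ k = Φ₁.L), sub_zero]
    show _ = (∑ j, Φ₁.W k _ j * Φ₁.hidden k (inp Φ₁ Φ₂ a b x) j) + Φ₁.b k _
    congr 1
    apply Fintype.sum_equiv (finCongr (cℓ_low Φ₁ Φ₂ (by omega : k ≤ Φ₁.L + 1)))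
    intro j
    erw [ih (by omega)]
    rfl

lemma clipComp_hidden_mid1 (i : Fin ((clipComp Φ₁ Φ₂ a b).ℓ (Φ₁.L + 1))) :
    (clipComp Φ₁ Φ₂ a b).hidden (Φ₁.L + 1) x i
      = max (Φ₁.realize (inp Φ₁ Φ₂ a b x) (Fin.cast (cℓ_low Φ₁ Φ₂ le_rfl) i) - a) 0 := by
  show max ((clipComp Φ₁ Φ₂ a b).affine Φ₁.L ((clipComp Φ₁ Φ₂ a b).hidden Φ₁.L x) i) 0 = _
  congr 1
  show (∑ j, (clipComp Φ₁ Φ₂ a b).W Φ₁.L i j * (clipComp Φ₁ Φ₂ a b).hidden Φ₁.L x j)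
      + (clipComp Φ₁ Φ₂ a b).b Φ₁.L i = _
  have hW : (clipComp Φ₁ Φ₂ a b).W Φ₁.L = fun i j =>
      Φ₁.W Φ₁.L (Fin.cast (cℓ_low Φ₁ Φ₂ (by omega)) i)
        (Fin.cast (cℓ_low Φ₁ Φ₂ (by omega)) j) := by
    show (if hk : Φ₁.L ≤ Φ₁.L then _ else _) = _
    erw [dif_pos le_rfl]
  have hb : (clipComp Φ₁ Φ₂ a b).b Φ₁.L = fun i =>
      Φ₁.b Φ₁.L (Fin.cast (cℓ_low Φ₁ Φ₂ (by omega)) i) - (if Φ₁.L = Φ₁.L then a else 0) := by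
    show (if hk : Φ₁.L ≤ Φ₁.L then _ else _) = _
    erw [dif_pos le_rfl]
  simp only [hW, hb]
  rw [if_pos trivial]
  show _ = ((∑ j, Φ₁.W Φ₁.L _ j * Φ₁.hidden Φ₁.L (inp Φ₁ Φ₂ a b x) j) + Φ₁.b Φ₁.L _) - a
  have hs : (∑ j : Fin ((clipComp Φ₁ Φ₂ a b).ℓ Φ₁.L),
        Φ₁.W Φ₁.L (Fin.cast (cℓ_low Φ₁ Φ₂ (by omega)) i)
          (Fin.cast (cℓ_low Φ₁ Φ₂ (by omega)) j) * (clipComp Φ₁ Φ₂ a b).hidden Φ₁.L x j)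
      = ∑ j, Φ₁.W Φ₁.L (Fin.cast (cℓ_low Φ₁ Φ₂ (by omega)) i) j
          * Φ₁.hidden Φ₁.L (inp Φ₁ Φ₂ a b x) j := by
    apply Fintype.sum_equiv (finCongr (cℓ_low Φ₁ Φ₂ (by omega : Φ₁.L ≤ Φ₁.L + 1)))
    intro j
    erw [clipComp_hidden_low Φ₁ Φ₂ a b x Φ₁.L le_rfl]
    rfl
  rw [hs]
  ring

lemma sum_ite_neg {m m' : ℕ} (e : m' = m) (i : Fin m') (y : Fin m → ℝ) :
    ∑ j : Fin m, (if (i : ℕ) = (j : ℕ) then (-1 : ℝ) else 0) * y j = - y (Fin.cast e i) := by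
  rw [Finset.sum_eq_single (Fin.cast e i)]
  · rw [if_pos (show (i : ℕ) = ((Fin.cast e i : Fin m) : ℕ) from rfl)]; ring
  · intro j _ hj
    rw [if_neg, zero_mul]
    intro hval
    apply hj
    apply Fin.ext
    exact hval.symm
  · intro hmem
    exact absurd (Finset.mem_univ _) hmem

lemma clipComp_hidden_mid2 (h : Φ₁.ℓ (Φ₁.L + 1) = Φ₂.ℓ 0) (hab : a ≤ b)
    (pf : (clipComp Φ₁ Φ₂ a b).ℓ (Φ₁.L + 2) = Φ₂.ℓ 0)
    (i : Fin ((clipComp Φ₁ Φ₂ a b).ℓ (Φ₁.L + 2))) :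
    (clipComp Φ₁ Φ₂ a b).hidden (Φ₁.L + 2) x i
      = b - junc Φ₁ Φ₂ a b h x (Fin.cast pf i) := by
  show max ((clipComp Φ₁ Φ₂ a b).affine (Φ₁.L + 1)
      ((clipComp Φ₁ Φ₂ a b).hidden (Φ₁.L + 1) x) i) 0 = _
  have hW : (clipComp Φ₁ Φ₂ a b).W (Φ₁.L + 1) =
      fun (i : Fin ((clipComp Φ₁ Φ₂ a b).ℓ (Φ₁.L + 1 + 1)))
        (j : Fin ((clipComp Φ₁ Φ₂ a b).ℓ (Φ₁.L + 1))) =>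
      (if (i : ℕ) = (j : ℕ) then (-1 : ℝ) else 0) := by
    show (if hk : Φ₁.L + 1 ≤ Φ₁.L then _ else _) = _
    erw [dif_neg (by omega : ¬ Φ₁.L + 1 ≤ Φ₁.L), dif_pos rfl]
    rfl
  have hb : (clipComp Φ₁ Φ₂ a b).b (Φ₁.L + 1) = fun _ => b - a := by
    show (if hk : Φ₁.L + 1 ≤ Φ₁.L then _ else _) = _
    erw [dif_neg (by omega : ¬ Φ₁.L + 1 ≤ Φ₁.L), dif_pos rfl]
    rfl
  show max ((∑ j, (clipComp Φ₁ Φ₂ a b).W (Φ₁.L + 1) i j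
      * (clipComp Φ₁ Φ₂ a b).hidden (Φ₁.L + 1) x j)
      + (clipComp Φ₁ Φ₂ a b).b (Φ₁.L + 1) i) 0 = _
  simp only [hW, hb]
  have e' : (clipComp Φ₁ Φ₂ a b).ℓ (Φ₁.L + 2) = (clipComp Φ₁ Φ₂ a b).ℓ (Φ₁.L + 1) :=
    pf.trans (h.symm.trans (cℓ_low Φ₁ Φ₂ le_rfl).symm)
  rw [sum_ite_neg e' i]
  rw [clipComp_hidden_mid1 Φ₁ Φ₂ a b x]
  show _ = b - clip a b (Φ₁.realize (inp Φ₁ Φ₂ a b x)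
    (Fin.cast (cℓ_low Φ₁ Φ₂ le_rfl) (Fin.cast e' i)))
  rw [← clip_identity hab, sub_sub_cancel]
  congr 1
  have key : ∀ r s : ℝ, r = s → -max (r - a) 0 + (b - a) = b - a - max (s - a) 0 := by
    intro r s hrs; subst hrs; ring
  exact key _ _ rfl

lemma clipComp_affine_clip (h : Φ₁.ℓ (Φ₁.L + 1) = Φ₂.ℓ 0) (hab : a ≤ b)
    (j : ℕ) (hj : j ≤ Φ₂.L)
    (hprev : 1 ≤ j → ∀ (pf0 : (clipComp Φ₁ Φ₂ a b).ℓ (Φ₁.L + 2 + j) = Φ₂.ℓ j)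
      (t : Fin ((clipComp Φ₁ Φ₂ a b).ℓ (Φ₁.L + 2 + j))),
      (clipComp Φ₁ Φ₂ a b).hidden (Φ₁.L + 2 + j) x t
        = Φ₂.hidden j (junc Φ₁ Φ₂ a b h x) (Fin.cast pf0 t))
    (pf : (clipComp Φ₁ Φ₂ a b).ℓ (Φ₁.L + 2 + j + 1) = Φ₂.ℓ (j + 1))
    (i : Fin ((clipComp Φ₁ Φ₂ a b).ℓ (Φ₁.L + 2 + j + 1))) :
    (clipComp Φ₁ Φ₂ a b).affine (Φ₁.L + 2 + j)
        ((clipComp Φ₁ Φ₂ a b).hidden (Φ₁.L + 2 + j) x) i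
      = Φ₂.affine j (Φ₂.hidden j (junc Φ₁ Φ₂ a b h x)) (Fin.cast pf i) := by
  have pf0 : (clipComp Φ₁ Φ₂ a b).ℓ (Φ₁.L + 2 + j) = Φ₂.ℓ j := by
    rcases Nat.eq_zero_or_pos j with hj0 | hj0
    · subst hj0
      exact (cℓ_high Φ₁ Φ₂ (by omega)).trans (congrArg Φ₂.ℓ (by omega))
    · exact (cℓ_high Φ₁ Φ₂ (by omega)).trans (congrArg Φ₂.ℓ (by omega))
  rcases Nat.eq_zero_or_pos j with hj0 | hj0
  · subst hj0
    -- the C layer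
    have hW : (clipComp Φ₁ Φ₂ a b).W (Φ₁.L + 2 + 0) = fun i t =>
        - Φ₂.W 0 (Fin.cast pf i) (Fin.cast pf0 t) := by
      show (if hk : Φ₁.L + 2 + 0 ≤ Φ₁.L then _ else _) = _
      erw [dif_neg (by omega : ¬ Φ₁.L + 2 + 0 ≤ Φ₁.L),
        dif_neg (by omega : ¬ Φ₁.L + 2 + 0 = Φ₁.L + 1),
        dif_pos (by omega : Φ₁.L + 2 + 0 = Φ₁.L + 2)]
      rfl
    have hb : (clipComp Φ₁ Φ₂ a b).b (Φ₁.L + 2 + 0) = fun i =>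
        (∑ t, Φ₂.W 0 (Fin.cast pf i) t * b) + Φ₂.b 0 (Fin.cast pf i) := by
      show (if hk : Φ₁.L + 2 + 0 ≤ Φ₁.L then _ else _) = _
      erw [dif_neg (by omega : ¬ Φ₁.L + 2 + 0 ≤ Φ₁.L),
        dif_neg (by omega : ¬ Φ₁.L + 2 + 0 = Φ₁.L + 1),
        dif_pos (by omega : Φ₁.L + 2 + 0 = Φ₁.L + 2)]
      rfl
    show (∑ t, (clipComp Φ₁ Φ₂ a b).W (Φ₁.L + 2 + 0) i t
        * (clipComp Φ₁ Φ₂ a b).hidden (Φ₁.L + 2 + 0) x t)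
        + (clipComp Φ₁ Φ₂ a b).b (Φ₁.L + 2 + 0) i = _
    simp only [hW, hb]
    have hsum : (∑ t : Fin ((clipComp Φ₁ Φ₂ a b).ℓ (Φ₁.L + 2 + 0)),
        - Φ₂.W 0 (Fin.cast pf i) (Fin.cast pf0 t)
          * (clipComp Φ₁ Φ₂ a b).hidden (Φ₁.L + 2 + 0) x t)
        = ∑ t : Fin (Φ₂.ℓ 0), - Φ₂.W 0 (Fin.cast pf i) t
            * (b - junc Φ₁ Φ₂ a b h x t) := by
      apply Fintype.sum_equiv (finCongr pf0)
      intro t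
      rw [clipComp_hidden_mid2 Φ₁ Φ₂ a b x h hab pf0]
      rfl
    rw [hsum]
    show _ = (∑ t, Φ₂.W 0 (Fin.cast pf i) t * junc Φ₁ Φ₂ a b h x t) + Φ₂.b 0 (Fin.cast pf i)
    rw [← add_assoc, ← Finset.sum_add_distrib]
    congr 1
    apply Finset.sum_congr rfl
    intro t _
    ring
  · -- a plain layer of Φ₂
    have ej : Φ₁.L + 2 + j - (Φ₁.L + 2) = j := by omega
    have hW : (clipComp Φ₁ Φ₂ a b).W (Φ₁.L + 2 + j) = fun i t =>
        Φ₂.W j (Fin.cast pf i) (Fin.cast pf0 t) := by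
      show (if hk : Φ₁.L + 2 + j ≤ Φ₁.L then _ else _) = _
      erw [dif_neg (by omega : ¬ Φ₁.L + 2 + j ≤ Φ₁.L),
        dif_neg (by omega : ¬ Φ₁.L + 2 + j = Φ₁.L + 1),
        dif_neg (by omega : ¬ Φ₁.L + 2 + j = Φ₁.L + 2)]
      funext i' t'
      exact Φ₂.W_cast ej _ _ _ _ i' t'
    have hb : (clipComp Φ₁ Φ₂ a b).b (Φ₁.L + 2 + j) = fun i =>
        Φ₂.b j (Fin.cast pf i) := by
      show (if hk : Φ₁.L + 2 + j ≤ Φ₁.L then _ else _) = _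
      erw [dif_neg (by omega : ¬ Φ₁.L + 2 + j ≤ Φ₁.L),
        dif_neg (by omega : ¬ Φ₁.L + 2 + j = Φ₁.L + 1),
        dif_neg (by omega : ¬ Φ₁.L + 2 + j = Φ₁.L + 2)]
      funext i'
      exact Φ₂.b_cast ej _ _ i'
    show (∑ t, (clipComp Φ₁ Φ₂ a b).W (Φ₁.L + 2 + j) i t
        * (clipComp Φ₁ Φ₂ a b).hidden (Φ₁.L + 2 + j) x t)
        + (clipComp Φ₁ Φ₂ a b).b (Φ₁.L + 2 + j) i = _
    simp only [hW, hb]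
    show _ = (∑ t, Φ₂.W j (Fin.cast pf i) t * Φ₂.hidden j (junc Φ₁ Φ₂ a b h x) t)
        + Φ₂.b j (Fin.cast pf i)
    congr 1
    apply Fintype.sum_equiv (finCongr pf0)
    intro t
    rw [hprev hj0 pf0]
    rfl

lemma clipComp_hidden_high (h : Φ₁.ℓ (Φ₁.L + 1) = Φ₂.ℓ 0) (hab : a ≤ b) :
    ∀ j, 1 ≤ j → j ≤ Φ₂.L + 1 →
    ∀ (pf : (clipComp Φ₁ Φ₂ a b).ℓ (Φ₁.L + 2 + j) = Φ₂.ℓ j)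
      (i : Fin ((clipComp Φ₁ Φ₂ a b).ℓ (Φ₁.L + 2 + j))),
      (clipComp Φ₁ Φ₂ a b).hidden (Φ₁.L + 2 + j) x i
        = Φ₂.hidden j (junc Φ₁ Φ₂ a b h x) (Fin.cast pf i) := by
  intro j
  induction j with
  | zero => omega
  | succ j ih =>
    intro _ hj pf i
    show max ((clipComp Φ₁ Φ₂ a b).affine (Φ₁.L + 2 + j)
        ((clipComp Φ₁ Φ₂ a b).hidden (Φ₁.L + 2 + j) x) i) 0 = _
    have key := clipComp_affine_clip Φ₁ Φ₂ a b x h hab j (by omega)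
      (fun hj1 pf0 t => ih hj1 (by omega) pf0 t) pf i
    rw [key]
    rfl

lemma clipComp_realize (h : Φ₁.ℓ (Φ₁.L + 1) = Φ₂.ℓ 0) (hab : a ≤ b)
    (i : Fin ((clipComp Φ₁ Φ₂ a b).ℓ ((clipComp Φ₁ Φ₂ a b).L + 1))) :
    (clipComp Φ₁ Φ₂ a b).realize x i
      = Φ₂.realize (junc Φ₁ Φ₂ a b h x) (Fin.cast (clipComp_ℓ_top Φ₁ Φ₂ a b) i) := by
  have key : ∀ (k : ℕ) (ek : Φ₁.L + 2 + Φ₂.L = k)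
      (pfk : (clipComp Φ₁ Φ₂ a b).ℓ (k + 1) = Φ₂.ℓ (Φ₂.L + 1))
      (i : Fin ((clipComp Φ₁ Φ₂ a b).ℓ (k + 1))),
      (clipComp Φ₁ Φ₂ a b).affine k ((clipComp Φ₁ Φ₂ a b).hidden k x) i
        = Φ₂.affine Φ₂.L (Φ₂.hidden Φ₂.L (junc Φ₁ Φ₂ a b h x)) (Fin.cast pfk i) := by
    intro k ek pfk i
    subst ek
    exact clipComp_affine_clip Φ₁ Φ₂ a b x h hab Φ₂.L le_rfl
      (fun hj1 pf0 t => clipComp_hidden_high Φ₁ Φ₂ a b x h hab Φ₂.L hj1 (by omega) pf0 t)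
      pfk i
  exact key (Φ₁.L + Φ₂.L + 2) (by omega) (clipComp_ℓ_top Φ₁ Φ₂ a b) i

end ClipCompLemmas

lemma mem_cube_iff {n : ℕ} {a b : ℝ} {x : Fin n → ℝ} :
    x ∈ cube n a b ↔ ∀ i, a ≤ x i ∧ x i ≤ b := by
  unfold cube
  rw [Set.mem_Icc]
  constructor
  · intro ⟨h1, h2⟩ i
    exact ⟨h1 i, h2 i⟩
  · intro h
    exact ⟨fun i => (h i).1, fun i => (h i).2⟩

lemma clipComp_Realizes {m0 m1 m2 : ℕ} {Ψ Φ : DNN} {R : (Fin m0 → ℝ) → Fin m1 → ℝ}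
    {g : (Fin m1 → ℝ) → Fin m2 → ℝ} (hΨ : Ψ.Realizes R) (hΦ : Φ.Realizes g)
    (a b : ℝ) (hab : a ≤ b) (h : Ψ.ℓ (Ψ.L + 1) = Φ.ℓ 0) :
    (clipComp Ψ Φ a b).Realizes (fun x => g (fun t => clip a b (R x t))) := by
  obtain ⟨hm, hn, hR⟩ := hΨ
  obtain ⟨hm', hn', hg⟩ := hΦ
  refine ⟨(clipComp_ℓ_zero Ψ Φ a b).trans hm, (clipComp_ℓ_top Ψ Φ a b).trans hn', ?_⟩
  intro x i
  show g (fun t => clip a b (R x t)) i = _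
  rw [clipComp_realize Ψ Φ a b _ h hab, hg]
  have harg : (fun j => (fun t => clip a b (R x t)) (Fin.cast hm' j))
      = junc Ψ Φ a b h (fun j => x (Fin.cast ((clipComp_ℓ_zero Ψ Φ a b).trans hm) j)) := by
    funext t
    show clip a b (R x (Fin.cast hm' t)) = _
    rw [hR]
    rfl
  rw [harg]
  rfl

lemma cost_elim {p : ℝ≥0∞} {m n : ℕ} {D : Set (Fin m → ℝ)}
    {f : (Fin m → ℝ) → (Fin n → ℝ)} {L ε B : ℝ} (hB : 0 ≤ B)
    (hc : Cost p D f L ε ≤ ENNReal.ofReal B) :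
    ∃ (Φ : DNN) (g : (Fin m → ℝ) → (Fin n → ℝ)), Φ.Realizes g ∧
      ((Φ.params : ℝ) ≤ B + 1) ∧
      (∀ x ∈ D, lpNorm p (g x - f x) ≤ ε) ∧
      (∀ x ∈ D, ∀ y ∈ D, lpNorm p (g x - g y) ≤ L * lpNorm p (x - y)) := by
  have hlt : Cost p D f L ε < ENNReal.ofReal B + 1 :=
    lt_of_le_of_lt hc (ENNReal.lt_add_right ENNReal.ofReal_ne_top one_ne_zero)
  rw [Cost, sInf_lt_iff] at hlt
  obtain ⟨N, ⟨Φ, g, hre, hN, herr, hlip⟩, hNlt⟩ := hlt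
  refine ⟨Φ, g, hre, ?_, herr, hlip⟩
  rw [hN] at hNlt
  have h1 : (1 : ℝ≥0∞) = ENNReal.ofReal 1 := by simp
  rw [h1, ← ENNReal.ofReal_add hB zero_le_one] at hNlt
  have := ENNReal.natCast_lt_ofReal.mp hNlt
  linarith

lemma lpNorm_triple {p : ℝ≥0∞} (hp : 1 ≤ p) {k : ℕ} (x y z : Fin k → ℝ) :
    lpNorm p (x - z) ≤ lpNorm p (x - y) + lpNorm p (y - z) := by
  have hxz : x - z = (x - y) + (y - z) := by funext i; simp [sub_add_sub_cancel]
  rw [hxz]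
  exact lpNorm_add_le hp _ _

end Aux

/-- **Proposition 2.8**: abstract DNN approximation of compositions of a polynomially
growing number `k(d) ≤ c d^c` of functions, each approximable with Lipschitz constant `1`
at cost `≤ c d^c ε⁻ᶜ`. -/
theorem abstract_composition_approx_polynomial_number
    (c : ℕ) (hc : 0 < c) (p : ℝ≥0∞) (hp : 1 ≤ p)
    (k : ℕ → ℕ) (dims : ℕ → ℕ → ℕ) (a b : ℕ → ℕ → ℝ)
    (g : ∀ d i : ℕ, (Fin (dims d i) → ℝ) → (Fin (dims d (i + 1)) → ℝ))
    (hk : ∀ d, 0 < d → 1 ≤ k d ∧ k d ≤ c * d ^ c)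
    (hdims : ∀ d, 0 < d → ∀ i ≤ k d, 1 ≤ dims d i ∧ dims d i ≤ d ^ c)
    (hab : ∀ d, 0 < d → ∀ i < k d, a d i < b d i)
    (hcont : ∀ d, 0 < d → ∀ i < k d,
      ContinuousOn (g d i) (cube (dims d i) (a d i) (b d i)))
    (hcost : ∀ d, 0 < d → ∀ i < k d, ∀ ε : ℝ, 0 < ε → ε ≤ 1 →
      Cost p (cube (dims d i) (a d i) (b d i)) (g d i) 1 ε ≤
        ENNReal.ofReal ((c : ℝ) * (d : ℝ) ^ c * ε ^ (-(c : ℤ))))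
    (hmap : ∀ d, 0 < d → ∀ i, i + 1 < k d → ∀ x ∈ cube (dims d i) (a d i) (b d i),
      g d i x ∈ cube (dims d (i + 1)) (a d (i + 1)) (b d (i + 1))) :
    ∃ K : ℕ, 0 < K ∧ ∀ d, 0 < d → ∀ ε : ℝ, 0 < ε → ε ≤ 1 →
      ∃ (Φ : DNN) (R : (Fin (dims d 0) → ℝ) → (Fin (dims d (k d)) → ℝ)),
        Φ.Realizes R ∧
        (Φ.params : ℝ) ≤ (K : ℝ) * (d : ℝ) ^ K * ε ^ (-(c : ℤ)) ∧
        ∀ x ∈ cube (dims d 0) (a d 0) (b d 0),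
          lpNorm p (R x - compSeq (dims d) (g d) (k d) x) ≤ ε := by
  refine ⟨4 * c ^ (c + 2) + c ^ 2 + 5 * c, ?_, ?_⟩
  · exact Nat.lt_of_lt_of_le (by omega : 0 < 5 * c) (Nat.le_add_left _ _)
  intro d hd ε hε hε1
  have hd1 : (1:ℝ) ≤ (d:ℝ) := by exact_mod_cast hd
  have hc1 : (1:ℝ) ≤ (c:ℝ) := by exact_mod_cast hc
  have hdc1 : (1:ℝ) ≤ (d:ℝ) ^ c := one_le_pow₀ hd1
  set X : ℝ := (c:ℝ) * (d:ℝ) ^ c with hXdef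
  have hX1 : (1:ℝ) ≤ X := by nlinarith
  have hXpos : (0:ℝ) < X := lt_of_lt_of_le one_pos hX1
  set δ : ℝ := ε / X with hδdef
  have hδpos : 0 < δ := div_pos hε hXpos
  have hδ1 : δ ≤ 1 := by
    rw [hδdef, div_le_one hXpos]
    exact le_trans hε1 hX1
  have hεcpos : (0:ℝ) < ε ^ c := pow_pos hε c
  have hE1 : (1:ℝ) ≤ ε ^ (-(c:ℤ)) := by
    rw [zpow_neg, zpow_natCast]
    exact (one_le_inv₀ hεcpos).mpr (pow_le_one₀ hε.le hε1)
  have hEpos : (0:ℝ) < ε ^ (-(c:ℤ)) := lt_of_lt_of_le one_pos hE1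
  have hδinv : δ ^ (-(c:ℤ)) = X ^ c * ε ^ (-(c:ℤ)) := by
    rw [zpow_neg, zpow_natCast, zpow_neg, zpow_natCast, hδdef, div_pow, inv_div,
      div_eq_mul_inv]
  -- choose the approximating networks
  have Hex : ∀ i : ℕ, ∃ (Φ : DNN)
      (g' : (Fin (dims d i) → ℝ) → (Fin (dims d (i+1)) → ℝ)),
      i < k d → (Φ.Realizes g' ∧ ((Φ.params : ℝ) ≤ X * δ ^ (-(c:ℤ)) + 1) ∧
        (∀ x ∈ cube (dims d i) (a d i) (b d i), lpNorm p (g' x - g d i x) ≤ δ) ∧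
        (∀ x ∈ cube (dims d i) (a d i) (b d i), ∀ y ∈ cube (dims d i) (a d i) (b d i),
          lpNorm p (g' x - g' y) ≤ 1 * lpNorm p (x - y))) := by
    intro i
    by_cases hi : i < k d
    · obtain ⟨Φ, g', hre, hpar, herr, hlip⟩ := cost_elim (p := p) (by positivity)
        (hcost d hd i hi δ hδpos hδ1)
      refine ⟨Φ, g', fun _ => ⟨hre, ?_, herr, hlip⟩⟩
      calc (Φ.params : ℝ) ≤ (c:ℝ) * (d:ℝ) ^ c * δ ^ (-(c:ℤ)) + 1 := hpar
        _ = X * δ ^ (-(c:ℤ)) + 1 := by rw [hXdef]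
    · exact ⟨⟨0, fun _ => 1, fun _ => 0, fun _ => 0⟩, fun _ _ => 0,
        fun hcon => absurd hcon hi⟩
  choose Φf gf hf using Hex
  -- compSeq stays in the cubes
  have hmem : ∀ j, j < k d → ∀ x ∈ cube (dims d 0) (a d 0) (b d 0),
      compSeq (dims d) (g d) j x ∈ cube (dims d j) (a d j) (b d j) := by
    intro j
    induction j with
    | zero => intro _ x hx; exact hx
    | succ j ih =>
      intro hj x hx
      exact hmap d hd j hj _ (ih (by omega) x hx)
  -- the inductive chain of composed networks
  have hchain : ∀ j, 1 ≤ j → j ≤ k d →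
      ∃ (Ψ : DNN) (R : (Fin (dims d 0) → ℝ) → (Fin (dims d j) → ℝ)),
        Ψ.Realizes R ∧
        ((Ψ.params : ℝ) ≤ (j : ℝ) * ((X * δ ^ (-(c:ℤ)) + 1) +
          (d:ℝ) ^ c * ((d:ℝ) ^ c + 1))) ∧
        ∀ x ∈ cube (dims d 0) (a d 0) (b d 0),
          lpNorm p (R x - compSeq (dims d) (g d) j x) ≤ (j : ℝ) * δ := by
    intro j
    induction j with
    | zero => omega
    | succ j ih =>
      intro _ hjk
      by_cases hj0 : j = 0
      · subst hj0
        obtain ⟨hre, hpar, herr, -⟩ := hf 0 (by omega)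
        refine ⟨Φf 0, gf 0, hre, ?_, ?_⟩
        · push_cast
          have hD2 : (0:ℝ) ≤ (d:ℝ) ^ c * ((d:ℝ) ^ c + 1) := by positivity
          linarith
        · intro x hx
          have h1 := herr x hx
          have hcomp : compSeq (dims d) (g d) 1 x = g d 0 x := rfl
          push_cast
          rw [one_mul, hcomp]
          exact h1
      · have h1j : 1 ≤ j := by omega
        obtain ⟨Ψ, R, hre, hpar, herr⟩ := ih h1j (by omega)
        obtain ⟨hre', hpar', herr', hlip'⟩ := hf j (by omega)
        have hmF : (Φf j).ℓ 0 = dims d j := hre'.choose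
        have hnΨ : Ψ.ℓ (Ψ.L + 1) = dims d j := hre.choose_spec.choose
        have hj' : Ψ.ℓ (Ψ.L + 1) = (Φf j).ℓ 0 := hnΨ.trans hmF.symm
        have habj : a d j ≤ b d j := (hab d hd j (by omega)).le
        have hdimsj : ((dims d j : ℕ) : ℝ) ≤ (d:ℝ) ^ c := by
          have := (hdims d hd j (by omega)).2
          calc ((dims d j : ℕ) : ℝ) ≤ ((d ^ c : ℕ) : ℝ) := by exact_mod_cast this
            _ = (d:ℝ) ^ c := by push_cast; ring
        refine ⟨clipComp Ψ (Φf j) (a d j) (b d j),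
          fun x => gf j (fun t => clip (a d j) (b d j) (R x t)),
          clipComp_Realizes hre hre' _ _ habj hj', ?_, ?_⟩
        · -- parameter bound
          rw [clipComp_params]
          push_cast
          have hjunc : ((Φf j).ℓ 0 : ℝ) * ((Ψ.ℓ (Ψ.L + 1) : ℝ) + 1)
              ≤ (d:ℝ) ^ c * ((d:ℝ) ^ c + 1) := by
            apply mul_le_mul
            · rw [hmF]; exact hdimsj
            · rw [hnΨ]; linarith
            · positivity
            · positivity
          have hexp : ((j:ℝ) + 1) * ((X * δ ^ (-(c:ℤ)) + 1) + (d:ℝ) ^ c * ((d:ℝ) ^ c + 1))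
              = (j:ℝ) * ((X * δ ^ (-(c:ℤ)) + 1) + (d:ℝ) ^ c * ((d:ℝ) ^ c + 1)) +
                ((X * δ ^ (-(c:ℤ)) + 1) + (d:ℝ) ^ c * ((d:ℝ) ^ c + 1)) := by ring
          rw [hexp]
          linarith
        · -- error bound
          intro x hx
          have hGj := hmem j (by omega) x hx
          have hclipmem : (fun t => clip (a d j) (b d j) (R x t))
              ∈ cube (dims d j) (a d j) (b d j) :=
            mem_cube_iff.mpr (fun t => ⟨le_clip, clip_le habj⟩)
          have h2 : lpNorm p (gf j (compSeq (dims d) (g d) j x)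
              - g d j (compSeq (dims d) (g d) j x)) ≤ δ :=
            herr' _ hGj
          have h1 : lpNorm p (gf j (fun t => clip (a d j) (b d j) (R x t))
              - gf j (compSeq (dims d) (g d) j x))
              ≤ 1 * lpNorm p ((fun t => clip (a d j) (b d j) (R x t))
                - compSeq (dims d) (g d) j x) :=
            hlip' _ hclipmem _ hGj
          have h3 : lpNorm p ((fun t => clip (a d j) (b d j) (R x t))
              - compSeq (dims d) (g d) j x)
              ≤ lpNorm p (R x - compSeq (dims d) (g d) j x) := by
            apply lpNorm_mono
            intro t
            have hGt := (mem_cube_iff.mp hGj) t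
            show |((fun t => clip (a d j) (b d j) (R x t))
                - compSeq (dims d) (g d) j x) t| ≤ |(R x - compSeq (dims d) (g d) j x) t|
            rw [Pi.sub_apply, Pi.sub_apply]
            calc |clip (a d j) (b d j) (R x t) - compSeq (dims d) (g d) j x t|
                = |clip (a d j) (b d j) (R x t)
                  - clip (a d j) (b d j) (compSeq (dims d) (g d) j x t)| := by
                  rw [clip_of_mem hGt.1 hGt.2]
              _ ≤ |R x t - compSeq (dims d) (g d) j x t| := abs_clip_sub_clip
          have tri := lpNorm_triple hp
            (gf j (fun t => clip (a d j) (b d j) (R x t)))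
            (gf j (compSeq (dims d) (g d) j x))
            (g d j (compSeq (dims d) (g d) j x))
          have hcomp : compSeq (dims d) (g d) (j + 1) x
              = g d j (compSeq (dims d) (g d) j x) := rfl
          have herrx := herr x hx
          show lpNorm p (gf j (fun t => clip (a d j) (b d j) (R x t))
              - compSeq (dims d) (g d) (j + 1) x) ≤ _
          rw [hcomp]
          push_cast
          have hfin : ((j:ℝ) + 1) * δ = (j:ℝ) * δ + δ := by ring
          rw [hfin]
          linarith
  obtain ⟨Ψ, R, hre, hpar, herr⟩ := hchain (k d) (hk d hd).1 le_rfl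
  have hkX : ((k d : ℕ) : ℝ) ≤ X := by
    have := (hk d hd).2
    calc ((k d : ℕ) : ℝ) ≤ ((c * d ^ c : ℕ) : ℝ) := by exact_mod_cast this
      _ = X := by rw [hXdef]; push_cast; ring
  refine ⟨Ψ, R, hre, ?_, ?_⟩
  · -- final parameter count
    have hXc1E : (1:ℝ) ≤ X ^ (c + 1) * ε ^ (-(c:ℤ)) := by
      have : (1:ℝ) ≤ X ^ (c + 1) := one_le_pow₀ hX1
      nlinarith
    have hXsq : X ^ 2 ≤ X ^ (c + 1) := pow_le_pow_right₀ hX1 (by omega)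
    have hdcX : (d:ℝ) ^ c ≤ X := by
      rw [hXdef]
      nlinarith
    have hinner : (X * δ ^ (-(c:ℤ)) + 1) + (d:ℝ) ^ c * ((d:ℝ) ^ c + 1)
        ≤ 4 * X ^ (c + 1) * ε ^ (-(c:ℤ)) := by
      have e1 : X * δ ^ (-(c:ℤ)) = X ^ (c + 1) * ε ^ (-(c:ℤ)) := by
        rw [hδinv, pow_succ]
        ring
      have e2 : (d:ℝ) ^ c * ((d:ℝ) ^ c + 1) ≤ X * (X + 1) := by
        apply mul_le_mul hdcX (by linarith) (by positivity) (by linarith)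
      have e3 : X * (X + 1) ≤ 2 * X ^ 2 := by nlinarith
      have e4 : (2:ℝ) * X ^ 2 ≤ 2 * (X ^ (c + 1) * ε ^ (-(c:ℤ))) := by nlinarith
      rw [e1]
      linarith
    have htot : (Ψ.params : ℝ) ≤ 4 * X ^ (c + 2) * ε ^ (-(c:ℤ)) := by
      calc (Ψ.params : ℝ)
          ≤ (k d : ℝ) * ((X * δ ^ (-(c:ℤ)) + 1) + (d:ℝ) ^ c * ((d:ℝ) ^ c + 1)) := hpar
        _ ≤ X * (4 * X ^ (c + 1) * ε ^ (-(c:ℤ))) := by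
            apply mul_le_mul hkX hinner
            · positivity
            · linarith
        _ = 4 * X ^ (c + 2) * ε ^ (-(c:ℤ)) := by rw [pow_succ, pow_succ]; ring
    have hXpow : X ^ (c + 2) = (c:ℝ) ^ (c + 2) * (d:ℝ) ^ (c * (c + 2)) := by
      rw [hXdef, mul_pow, ← pow_mul]
    have hKexp : c * (c + 2) ≤ 4 * c ^ (c + 2) + c ^ 2 + 5 * c := by
      have hce : c * (c + 2) = c ^ 2 + 2 * c := by ring
      rw [hce]
      exact Nat.add_le_add (Nat.le_add_left _ _) (by omega)
    have hdpow : (d:ℝ) ^ (c * (c + 2)) ≤ (d:ℝ) ^ (4 * c ^ (c + 2) + c ^ 2 + 5 * c) :=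
      pow_le_pow_right₀ hd1 hKexp
    have hcoef : (4:ℝ) * (c:ℝ) ^ (c + 2) ≤ ((4 * c ^ (c + 2) + c ^ 2 + 5 * c : ℕ) : ℝ) := by
      push_cast
      have h1 : (0:ℝ) ≤ (c:ℝ) ^ 2 := by positivity
      have h2 : (0:ℝ) ≤ 5 * (c:ℝ) := by positivity
      linarith
    calc (Ψ.params : ℝ) ≤ 4 * X ^ (c + 2) * ε ^ (-(c:ℤ)) := htot
      _ = (4 * (c:ℝ) ^ (c + 2)) * (d:ℝ) ^ (c * (c + 2)) * ε ^ (-(c:ℤ)) := by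
          rw [hXpow]; ring
      _ ≤ ((4 * c ^ (c + 2) + c ^ 2 + 5 * c : ℕ) : ℝ) *
            (d:ℝ) ^ (4 * c ^ (c + 2) + c ^ 2 + 5 * c) * ε ^ (-(c:ℤ)) := by
          apply mul_le_mul_of_nonneg_right _ hEpos.le
          apply mul_le_mul hcoef hdpow (by positivity)
          positivity
  · intro x hx
    calc lpNorm p (R x - compSeq (dims d) (g d) (k d) x) ≤ (k d : ℝ) * δ := herr x hx
      _ ≤ X * (ε / X) := by
          rw [hδdef]
          apply mul_le_mul_of_nonneg_right hkX
          positivity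
      _ = ε := mul_div_cancel₀ ε (ne_of_gt hXpos) |>.symm ▸ by
          field_simp

end
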